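/- arXiv:2508.07039 — 3 statements merged into one kernel-verified Lean document; each statement's English description precedes it below -/
import Mathlib

section
/- Let 1 < p < 2, and for ε > 0 define δ(ε,p) = sqrt( (1/2)·((p-1)/(2ε))^{2/(2-p)} + 1/2 ) − 1. Then for every k > 0 there exists ε_{p,k} > 0 such that for all real numbers a, b: 2kp|a|^{p-1}|b|·1_{|b| ≥ δ(ε_{p,k},p)|a|} + p·ε_{p,k}·|a|^{p-2}|b|²·1_{|b| < δ(ε_{p,k},p)|a|} ≤ |a+b|^p − |a|^p − p|a|^{p-2}·a·b·1_{a ≠ 0}. -/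
open Real Set Filter Topology

noncomputable def deltaEps (ε p : ℝ) : ℝ :=
  Real.sqrt ((1 / 2) * ((p - 1) / (2 * ε)) ^ ((2 : ℝ) / (2 - p)) + 1 / 2) - 1

section KPAux

variable {p : ℝ} (hp1 : 1 < p) (hp2 : p < 2)
include hp1 hp2

-- ψ monotone on [-1, δ]
lemma KP_psi_mono {ε δ : ℝ} (hε : 0 < ε) (hδ : 0 ≤ δ)
    (hεδ : 2 * ε ≤ (p - 1) * (1 + δ) ^ (p - 2)) :
    MonotoneOn (fun t : ℝ => |1 + t| ^ (p - 1) - 1 - 2 * ε * t) (Icc (-1) δ) := by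
  have hcont : ContinuousOn (fun t : ℝ => |1 + t| ^ (p - 1) - 1 - 2 * ε * t) (Icc (-1) δ) := by
    apply Continuous.continuousOn
    have h1 : Continuous (fun t : ℝ => |1 + t| ^ (p - 1)) := by
      have := (Real.continuous_rpow_const (le_of_lt (by linarith : (0:ℝ) < p - 1)))
      exact this.comp (continuous_const.add continuous_id).abs
    continuity
  apply monotoneOn_of_hasDerivWithinAt_nonneg (f' := fun t =>
      (p - 1) * (1 + t) ^ (p - 2) - 2 * ε) (convex_Icc _ _) hcont
  · intro x hx
    rw [interior_Icc] at hx
    have hx1 : 0 < 1 + x := by linarith [hx.1]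
    have hd : HasDerivAt (fun t : ℝ => |1 + t| ^ (p - 1))
        ((p - 1) * (1 + x) ^ (p - 1 - 1)) x := by
      have h1 : HasDerivAt (fun t : ℝ => 1 + t) 1 x := by
        simpa using (hasDerivAt_id x).const_add 1
      have h2 := h1.rpow_const (p := p - 1) (Or.inl hx1.ne')
      rw [one_mul] at h2
      apply h2.congr_of_eventuallyEq
      have hev : ∀ᶠ t in 𝓝 x, 0 < 1 + t :=
        ((continuous_const.add continuous_id).tendsto x).eventually (eventually_gt_nhds hx1)
      filter_upwards [hev] with t ht
      rw [abs_of_pos ht]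
    have : HasDerivAt (fun t : ℝ => |1 + t| ^ (p - 1) - 1 - 2 * ε * t)
        ((p - 1) * (1 + x) ^ (p - 2) - 2 * ε) x := by
      have := (hd.sub_const 1).sub ((hasDerivAt_id x).const_mul (2 * ε))
      rw [show p - 1 - 1 = p - 2 by ring] at this
      exact this.congr_deriv (by ring)
    exact this.hasDerivWithinAt
  · intro x hx
    rw [interior_Icc] at hx
    have hx1 : 0 < 1 + x := by linarith [hx.1]
    have hbd : (1 + δ) ^ (p - 2) ≤ (1 + x) ^ (p - 2) :=
      Real.rpow_le_rpow_of_nonpos hx1 (by linarith [hx.2]) (by linarith)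
    nlinarith [hbd, (by linarith : (0:ℝ) < p - 1)]

lemma KP_small {ε δ : ℝ} (hε : 0 < ε) (hδ : 0 ≤ δ)
    (hεδ : 2 * ε ≤ (p - 1) * (1 + δ) ^ (p - 2)) :
    ∀ t : ℝ, |t| ≤ δ → p * ε * t ^ 2 ≤ |1 + t| ^ p - 1 - p * t := by
  have hp0 : 0 < p := by linarith
  have hδ1 : (1 + δ) ^ (p - 2) ≤ 1 :=
    Real.rpow_le_one_of_one_le_of_nonpos (by linarith) (by linarith)
  have hε1 : 2 * ε ≤ 1 := by nlinarith
  set h : ℝ → ℝ := fun t => |1 + t| ^ p - 1 - p * t - p * ε * t ^ 2 with hh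
  have hcont : Continuous h := by
    have h1 : Continuous (fun t : ℝ => |1 + t| ^ p) :=
      (Real.continuous_rpow_const hp0.le).comp (continuous_const.add continuous_id).abs
    fun_prop
  have hpsi := KP_psi_mono hp1 hp2 hε hδ hεδ
  -- derivative of h where 1 + x > 0
  have hdpos : ∀ x : ℝ, 0 < 1 + x →
      HasDerivAt h (p * ((1 + x) ^ (p - 1) - 1 - 2 * ε * x)) x := by
    intro x hx1
    have h1 : HasDerivAt (fun t : ℝ => 1 + t) 1 x := by
      simpa using (hasDerivAt_id x).const_add 1
    have h2 := h1.rpow_const (p := p) (Or.inl hx1.ne')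
    rw [one_mul] at h2
    have h3 : HasDerivAt (fun t : ℝ => |1 + t| ^ p) (p * (1 + x) ^ (p - 1)) x := by
      apply h2.congr_of_eventuallyEq
      have hev : ∀ᶠ t in 𝓝 x, 0 < 1 + t :=
        ((continuous_const.add continuous_id).tendsto x).eventually (eventually_gt_nhds hx1)
      filter_upwards [hev] with t ht
      rw [abs_of_pos ht]
    have h4 : HasDerivAt (fun t : ℝ => p * t) p x := by
      simpa using (hasDerivAt_id x).const_mul p
    have h5 : HasDerivAt (fun t : ℝ => p * ε * t ^ 2) (p * ε * (2 * x)) x := by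
      simpa using ((hasDerivAt_pow 2 x).const_mul (p * ε))
    have := ((h3.sub_const 1).sub h4).sub h5
    exact this.congr_deriv (by ring)
  have hdneg : ∀ x : ℝ, 1 + x < 0 →
      HasDerivAt h (-(p * (-(1 + x)) ^ (p - 1)) - p - p * ε * (2 * x)) x := by
    intro x hx1
    have h1 : HasDerivAt (fun t : ℝ => -(1 + t)) (-1) x := by
      exact ((hasDerivAt_id x).const_add 1).neg
    have h2 := h1.rpow_const (p := p) (Or.inl (by linarith : (0:ℝ) < -(1+x)).ne')
    have h3 : HasDerivAt (fun t : ℝ => |1 + t| ^ p) (-(p * (-(1 + x)) ^ (p - 1))) x := by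
      have h2' : HasDerivAt (fun t : ℝ => (-(1 + t)) ^ p) (-(p * (-(1 + x)) ^ (p - 1))) x :=
        h2.congr_deriv (by ring)
      apply h2'.congr_of_eventuallyEq
      have hev : ∀ᶠ t in 𝓝 x, 1 + t < 0 :=
        ((continuous_const.add continuous_id).tendsto x).eventually (eventually_lt_nhds hx1)
      filter_upwards [hev] with t ht
      rw [abs_of_neg ht]
    have h4 : HasDerivAt (fun t : ℝ => p * t) p x := by
      simpa using (hasDerivAt_id x).const_mul p
    have h5 : HasDerivAt (fun t : ℝ => p * ε * t ^ 2) (p * ε * (2 * x)) x := by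
      simpa using ((hasDerivAt_pow 2 x).const_mul (p * ε))
    exact ((h3.sub_const 1).sub h4).sub h5
  have hzero : h 0 = 0 := by simp [hh]
  -- monotone on [0, δ]
  have M1 : MonotoneOn h (Icc 0 δ) := by
    apply monotoneOn_of_hasDerivWithinAt_nonneg (f' := fun x =>
        p * ((1 + x) ^ (p - 1) - 1 - 2 * ε * x)) (convex_Icc _ _) hcont.continuousOn
    · intro x hx
      rw [interior_Icc] at hx
      exact (hdpos x (by linarith [hx.1])).hasDerivWithinAt
    · intro x hx
      rw [interior_Icc] at hx
      have hx1 : 0 < 1 + x := by linarith [hx.1]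
      have := hpsi (Set.mem_Icc.mpr ⟨by norm_num, hδ⟩)
        (Set.mem_Icc.mpr ⟨by linarith [hx.1], hx.2.le⟩) hx.1.le
      norm_num at this
      rw [abs_of_pos hx1] at this
      nlinarith [this, hp0]
  have M2 : AntitoneOn h (Icc (-1) 0) := by
    apply antitoneOn_of_hasDerivWithinAt_nonpos (f' := fun x =>
        p * ((1 + x) ^ (p - 1) - 1 - 2 * ε * x)) (convex_Icc _ _) hcont.continuousOn
    · intro x hx
      rw [interior_Icc] at hx
      exact (hdpos x (by linarith [hx.1])).hasDerivWithinAt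
    · intro x hx
      rw [interior_Icc] at hx
      have hx1 : 0 < 1 + x := by linarith [hx.1]
      have := hpsi (Set.mem_Icc.mpr ⟨hx.1.le, by linarith [hx.2]⟩)
        (Set.mem_Icc.mpr ⟨by norm_num, hδ⟩) hx.2.le
      norm_num at this
      rw [abs_of_pos hx1] at this
      nlinarith [this, hp0]
  have M3 : AntitoneOn h (Icc (-δ) (-1)) := by
    apply antitoneOn_of_hasDerivWithinAt_nonpos (f' := fun x =>
        -(p * (-(1 + x)) ^ (p - 1)) - p - p * ε * (2 * x)) (convex_Icc _ _) hcont.continuousOn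
    · intro x hx
      rw [interior_Icc] at hx
      exact (hdneg x (by linarith [hx.2])).hasDerivWithinAt
    · intro x hx
      rw [interior_Icc] at hx
      have hu0 : (0:ℝ) < -(1 + x) := by linarith [hx.2]
      have hu1 : -(1 + x) ≤ 1 + δ := by linarith [hx.1]
      have h2e : 2 * ε ≤ (1 + δ) ^ (p - 2) := by
        have hpow : (0:ℝ) < (1 + δ) ^ (p - 2) := Real.rpow_pos_of_pos (by linarith) _
        nlinarith
      have h6 : (1 + δ) ^ (p - 2) ≤ (-(1 + x)) ^ (p - 2) :=
        Real.rpow_le_rpow_of_nonpos hu0 hu1 (by linarith)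
      have h7 : (-(1 + x)) ^ (p - 2) * (-(1 + x)) = (-(1 + x)) ^ (p - 1) := by
        rw [← Real.rpow_add_one hu0.ne' (p - 2)]
        congr 1
        ring
      have h8 : 2 * ε * (-(1 + x)) ≤ (-(1 + x)) ^ (p - 1) := by
        calc 2 * ε * (-(1 + x)) ≤ (1 + δ) ^ (p - 2) * (-(1 + x)) := by nlinarith
          _ ≤ (-(1 + x)) ^ (p - 2) * (-(1 + x)) := by nlinarith
          _ = (-(1 + x)) ^ (p - 1) := h7
      linarith [mul_le_mul_of_nonneg_left h8 hp0.le, mul_le_mul_of_nonneg_left hε1 hp0.le]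
  -- conclude
  intro t ht
  have habs := abs_le.mp ht
  rcases le_or_gt 0 t with h0 | h0
  · have := M1 (Set.mem_Icc.mpr ⟨le_refl 0, hδ⟩) (Set.mem_Icc.mpr ⟨h0, habs.2⟩) h0
    rw [hzero] at this
    simp only [hh] at this
    linarith
  · rcases le_or_gt (-1) t with h1 | h1
    · have := M2 (Set.mem_Icc.mpr ⟨h1, h0.le⟩) (Set.mem_Icc.mpr ⟨by norm_num, le_refl 0⟩) h0.le
      rw [hzero] at this
      simp only [hh] at this
      linarith
    · have hδ1' : (1:ℝ) ≤ δ := by linarith [habs.1]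
      have hm1 : h (-1) ≤ h t := by
        exact M3 (Set.mem_Icc.mpr ⟨habs.1, h1.le⟩)
          (Set.mem_Icc.mpr ⟨by linarith, le_refl (-1)⟩) h1.le
      have hm2 : h 0 ≤ h (-1) := by
        exact M2 (Set.mem_Icc.mpr ⟨le_refl (-1), by norm_num⟩)
          (Set.mem_Icc.mpr ⟨by norm_num, le_refl 0⟩) (by norm_num)
      rw [hzero] at hm2
      have : 0 ≤ h t := le_trans hm2 hm1
      simp only [hh] at this
      linarith

lemma KP_large {k : ℝ} (hk : 0 < k) :
    ∀ t : ℝ, 2 ≤ |t| → 2 ^ p * (1 + p * (1 + 2 * k)) ≤ |t| ^ (p - 1) →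
      2 * k * p * |t| ≤ |1 + t| ^ p - 1 - p * t := by
  intro t h2t hA
  have ht0 : (0:ℝ) < |t| := by linarith
  have h2p : (0:ℝ) < 2 ^ p := Real.rpow_pos_of_pos (by norm_num) p
  have hb : |t| / 2 ≤ |1 + t| := by
    have := abs_sub_abs_le_abs_sub t (-1)
    simp only [sub_neg_eq_add, abs_neg, abs_one] at this
    rw [add_comm] at this
    linarith
  have h1 : (|t| / 2) ^ p ≤ |1 + t| ^ p :=
    Real.rpow_le_rpow (by positivity) hb (by linarith)
  have h2 : (|t| / 2) ^ p = |t| ^ p / 2 ^ p := Real.div_rpow (abs_nonneg t) (by norm_num) p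
  have h3 : |t| ^ p = |t| ^ (p - 1) * |t| := by
    rw [← Real.rpow_add_one ht0.ne' (p - 1)]
    congr 1
    ring
  have h4 : 2 ^ p * (1 + p * (1 + 2 * k)) * |t| ≤ |t| ^ (p - 1) * |t| :=
    mul_le_mul_of_nonneg_right hA (abs_nonneg t)
  have h5 : (1 + p * (1 + 2 * k)) * |t| ≤ |t| ^ p / 2 ^ p := by
    rw [h3]
    rw [le_div_iff₀ h2p]
    nlinarith
  have h6 : p * t ≤ p * |t| := mul_le_mul_of_nonneg_left (le_abs_self t) (by linarith)
  nlinarith [h1, h2, h5, h6, h2t]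

end KPAux

theorem kruse_popier_lemma5 (p : ℝ) (hp1 : 1 < p) (hp2 : p < 2) (k : ℝ) (hk : 0 < k) :
    ∃ ε : ℝ, 0 < ε ∧ ∀ a b : ℝ,
      2 * k * p * |a| ^ (p - 1) * |b| * (if deltaEps ε p * |a| ≤ |b| then 1 else 0)
        + p * ε * |a| ^ (p - 2) * b ^ 2 * (if |b| < deltaEps ε p * |a| then 1 else 0)
      ≤ |a + b| ^ p - |a| ^ p - p * |a| ^ (p - 2) * a * b * (if a ≠ 0 then 1 else 0) := by
  have hp0 : (0:ℝ) < p := by linarith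
  set A : ℝ := 2 ^ p * (1 + p * (1 + 2 * k)) with hA
  have hA0 : 0 < A := by
    have h2 : (0:ℝ) < 2 ^ p := Real.rpow_pos_of_pos (by norm_num) p
    have h3 : (0:ℝ) < 1 + p * (1 + 2 * k) := by nlinarith
    exact mul_pos h2 h3
  set T : ℝ := max 2 (A ^ (p - 1)⁻¹) with hT
  have hT2 : (2:ℝ) ≤ T := le_max_left _ _
  have hT0 : (0:ℝ) < T := by linarith
  have h1T : (0:ℝ) < 1 + T := by linarith
  have hTA : A ≤ T ^ (p - 1) := by
    have h1 : (A ^ (p - 1)⁻¹) ^ (p - 1) = A :=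
      Real.rpow_inv_rpow hA0.le (by linarith : p - 1 ≠ 0)
    calc A = (A ^ (p - 1)⁻¹) ^ (p - 1) := h1.symm
      _ ≤ T ^ (p - 1) := Real.rpow_le_rpow (Real.rpow_nonneg hA0.le _)
          (le_max_right _ _) (by linarith)
  set M : ℝ := 2 * (1 + T) ^ 2 - 1 with hM
  have hM1 : (1:ℝ) ≤ M := by nlinarith
  have hM0 : (0:ℝ) < M := by linarith
  have hMe : (0:ℝ) < M ^ ((2 - p) / 2) := Real.rpow_pos_of_pos hM0 _
  set ε : ℝ := (p - 1) / (2 * M ^ ((2 - p) / 2)) with hε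
  have hε0 : 0 < ε := by
    apply div_pos (by linarith) (by linarith)
  have hδeq : deltaEps ε p = T := by
    have h2p' : (2:ℝ) - p ≠ 0 := by linarith
    have hp1' : p - 1 ≠ 0 := by linarith
    have hfrac : (p - 1) / (2 * ε) = M ^ ((2 - p) / 2) := by
      rw [hε]
      rw [div_eq_iff (by positivity : 2 * ((p - 1) / (2 * M ^ ((2 - p) / 2))) ≠ 0)]
      field_simp
    have hX : ((p - 1) / (2 * ε)) ^ ((2:ℝ) / (2 - p)) = M := by
      rw [hfrac, ← Real.rpow_mul hM0.le]
      rw [show (2 - p) / 2 * (2 / (2 - p)) = 1 by field_simp]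
      exact Real.rpow_one M
    unfold deltaEps
    rw [hX]
    rw [show (1:ℝ)/2 * M + 1/2 = (1 + T)^2 by rw [hM]; ring]
    rw [Real.sqrt_sq h1T.le]
    ring
  have hεδ : 2 * ε ≤ (p - 1) * (1 + T) ^ (p - 2) := by
    have e1 : ((1 + T):ℝ) ^ (p - 2) = (((1 + T):ℝ) ^ (2:ℕ)) ^ ((p - 2) / 2) := by
      rw [← Real.rpow_natCast (1 + T) 2, ← Real.rpow_mul h1T.le]
      congr 1
      push_cast
      ring
    have e2 : M ^ ((p - 2) / 2) ≤ (((1 + T):ℝ) ^ (2:ℕ)) ^ ((p - 2) / 2) := by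
      apply Real.rpow_le_rpow_of_nonpos (by positivity) (by rw [hM]; nlinarith) (by linarith)
    have e3 : 2 * ε = (p - 1) * M ^ ((p - 2) / 2) := by
      rw [hε, show (p - 2) / 2 = -((2 - p) / 2) by ring, Real.rpow_neg hM0.le]
      field_simp
    rw [e3, e1]
    exact mul_le_mul_of_nonneg_left e2 (by linarith)
  have keyBig : ∀ t : ℝ, T ≤ |t| → 2 * k * p * |t| ≤ |1 + t| ^ p - 1 - p * t := by
    intro t hc
    apply KP_large hp1 hp2 hk t (le_trans hT2 hc)
    calc A ≤ T ^ (p - 1) := hTA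
      _ ≤ |t| ^ (p - 1) := Real.rpow_le_rpow hT0.le hc (by linarith)
  have keySmall : ∀ t : ℝ, |t| < T → p * ε * t ^ 2 ≤ |1 + t| ^ p - 1 - p * t :=
    fun t hc => KP_small hp1 hp2 hε0 hT0.le hεδ t hc.le
  refine ⟨ε, hε0, ?_⟩
  -- main inequality for positive a
  have main : ∀ a t : ℝ, 0 < a →
      2 * k * p * |a| ^ (p - 1) * |a * t| * (if deltaEps ε p * |a| ≤ |a * t| then 1 else 0)
        + p * ε * |a| ^ (p - 2) * (a * t) ^ 2 * (if |a * t| < deltaEps ε p * |a| then 1 else 0)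
      ≤ |a + a * t| ^ p - |a| ^ p
        - p * |a| ^ (p - 2) * a * (a * t) * (if a ≠ 0 then 1 else 0) := by
    intro a t ha
    have haa : |a| = a := abs_of_pos ha
    have hap : (0:ℝ) < a ^ p := Real.rpow_pos_of_pos ha p
    have eabs : |a * t| = a * |t| := by rw [abs_mul, haa]
    have epm1 : a ^ (p - 1) * a = a ^ p := by
      rw [← Real.rpow_add_one ha.ne' (p - 1)]; congr 1; ring
    have epm2 : a ^ (p - 2) * a = a ^ (p - 1) := by
      rw [← Real.rpow_add_one ha.ne' (p - 2)]; congr 1; ring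
    have E1 : 2 * k * p * |a| ^ (p - 1) * |a * t| = a ^ p * (2 * k * p * |t|) := by
      rw [haa, eabs, ← epm1]; ring
    have E2 : p * ε * |a| ^ (p - 2) * (a * t) ^ 2 = a ^ p * (p * ε * t ^ 2) := by
      rw [haa, ← epm1, ← epm2]; ring
    have E3 : |a + a * t| ^ p = a ^ p * |1 + t| ^ p := by
      rw [show a + a * t = a * (1 + t) by ring, abs_mul, haa,
        Real.mul_rpow ha.le (abs_nonneg _)]
    have E4 : p * |a| ^ (p - 2) * a * (a * t) = a ^ p * (p * t) := by
      rw [haa, ← epm1, ← epm2]; ring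
    have cond1 : (deltaEps ε p * a ≤ |a * t|) ↔ T ≤ |t| := by
      rw [hδeq, eabs, mul_comm T a]
      exact mul_le_mul_iff_right₀ ha
    have cond2 : (|a * t| < deltaEps ε p * a) ↔ |t| < T := by
      rw [hδeq, eabs, mul_comm T a]
      exact mul_lt_mul_iff_right₀ ha
    rw [if_pos (ha.ne' : a ≠ 0), E1, E2, E3, E4, haa, mul_one]
    rcases le_or_gt T |t| with hc | hc
    · rw [if_pos (cond1.mpr hc), if_neg ((not_congr cond2).mpr (not_lt.mpr hc)),
        mul_one, mul_zero, add_zero]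
      have h9 := mul_le_mul_of_nonneg_left (keyBig t hc) hap.le
      rw [mul_sub, mul_sub, mul_one] at h9
      linarith
    · rw [if_neg ((not_congr cond1).mpr (not_le.mpr hc)), if_pos (cond2.mpr hc),
        mul_one, mul_zero, zero_add]
      have h9 := mul_le_mul_of_nonneg_left (keySmall t hc) hap.le
      rw [mul_sub, mul_sub, mul_one] at h9
      linarith
  intro a b
  rcases lt_trichotomy a 0 with ha | rfl | ha
  · have hb : (-a) * (b / a) = -b := by
      field_simp
      rw [mul_div_cancel_left₀ b ha.ne]
    have h10 := main (-a) (b / a) (by linarith)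
    rw [hb] at h10
    rw [show (-a : ℝ) + -b = -(a + b) by ring, abs_neg (a + b), abs_neg a, abs_neg b,
      neg_sq b, show p * |a| ^ (p - 2) * -a * -b = p * |a| ^ (p - 2) * a * b by ring] at h10
    simp only [ne_eq, neg_eq_zero] at h10
    simp only [ne_eq]
    exact h10
  · have hcond : ¬ (|b| < deltaEps ε p * |0|) := by
      simp only [abs_zero, mul_zero]
      exact not_lt.mpr (abs_nonneg b)
    rw [if_neg hcond]
    rw [if_neg (by simp : ¬ ((0:ℝ) ≠ 0))]
    simp only [abs_zero, Real.zero_rpow (show p - 1 ≠ 0 by intro h; nlinarith),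
      Real.zero_rpow (show p - 2 ≠ 0 by intro h; nlinarith),
      Real.zero_rpow hp0.ne', zero_add, mul_zero, zero_mul, add_zero, sub_zero]
    positivity
  · have hb : a * (b / a) = b := by
      field_simp
    have h10 := main a (b / a) ha
    rw [hb] at h10
    exact h10
end

section
/- Let p ∈ (1,2), c(p) = p(p-1)/2. For all real numbers x and h with |x| ∨ |x+h| ≠ 0: |x+h|^p − |x|^p − p|x|^{p-1}·sign(x)·h ≥ c(p)·h²·(|x|² ∨ |x+h|²)^{(p-2)/2}, where sign(x) = x/|x| for x ≠ 0 and sign(0) = 0. -/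
open Real Set

lemma lemB {p : ℝ} (hp1 : 1 < p) (hp2 : p < 2) {u : ℝ} (hu0 : 0 ≤ u) (hu1 : u ≤ 1) :
    p * (p-1)/2 * (1-u)^2 ≤ u ^ p - 1 + p * (1 - u) := by
  set c := p * (p-1)/2 with hc
  set g : ℝ → ℝ := fun u => u ^ p - 1 + p * (1 - u) - c * (1-u)^2 with hg
  have hd : ∀ v : ℝ, HasDerivAt g (p * v ^ (p-1) - p + 2*c*(1-v)) v := by
    intro v
    have h1 : HasDerivAt (fun w : ℝ => w ^ p) (p * v ^ (p-1)) v :=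
      Real.hasDerivAt_rpow_const (Or.inr hp1.le)
    have h2 := ((h1.sub_const 1).add (((hasDerivAt_const v (1:ℝ)).sub (hasDerivAt_id v)).const_mul p)).sub
      ((((hasDerivAt_const v (1:ℝ)).sub (hasDerivAt_id v)).pow 2).const_mul c)
    refine h2.congr_deriv ?_
    norm_num; ring
  have hanti : AntitoneOn g (Icc 0 1) := by
    apply antitoneOn_of_deriv_nonpos (convex_Icc 0 1)
    · exact fun v _ => ((hd v).continuousAt).continuousWithinAt
    · exact fun v _ => ((hd v).differentiableAt).differentiableWithinAt
    · intro v hv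
      rw [interior_Icc] at hv
      rw [(hd v).deriv]
      have hb : v ^ (p-1) ≤ 1 + (p-1) * (v - 1) := by
        have := rpow_one_add_le_one_add_mul_self (s := v - 1) (by linarith [hv.1])
          (p := p - 1) (by linarith) (by linarith)
        simpa using this
      have hcc : 2 * c = p * (p-1) := by rw [hc]; ring
      nlinarith [hv.1.le, hv.2.le, hp1]
  have h1 : g 1 ≤ g u := hanti ⟨hu0, hu1⟩ ⟨zero_le_one, le_rfl⟩ hu1
  have h0 : g 1 = 0 := by simp [hg, Real.one_rpow]
  rw [h0] at h1
  simp only [hg] at h1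
  linarith

lemma lemA {p : ℝ} (hp1 : 1 < p) (hp2 : p < 2) {t : ℝ} (ht0 : 0 < t) (ht1 : t ≤ 1) :
    p * (p-1)/2 * (1-t)^2 ≤ 1 + (p-1) * t ^ p - p * t ^ (p-1) := by
  set c := p * (p-1)/2 with hc
  set f : ℝ → ℝ := fun u => 1 + (p-1) * u ^ p - p * u ^ (p-1) - c * (1-u)^2 with hf
  have hd : ∀ v : ℝ, v ≠ 0 → HasDerivAt f
      ((p-1) * (p * v ^ (p-1)) - p * ((p-1) * v ^ (p-1-1)) + 2*c*(1-v)) v := by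
    intro v hv
    have h1 : HasDerivAt (fun w : ℝ => w ^ p) (p * v ^ (p-1)) v :=
      Real.hasDerivAt_rpow_const (Or.inr hp1.le)
    have h2 : HasDerivAt (fun w : ℝ => w ^ (p-1)) ((p-1) * v ^ (p-1-1)) v :=
      Real.hasDerivAt_rpow_const (Or.inl hv)
    have h3 := (((hasDerivAt_const v (1:ℝ)).add (h1.const_mul (p-1))).sub (h2.const_mul p)).sub
      ((((hasDerivAt_const v (1:ℝ)).sub (hasDerivAt_id v)).pow 2).const_mul c)
    refine h3.congr_deriv ?_
    norm_num; ring
  have hanti : AntitoneOn f (Icc t 1) := by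
    apply antitoneOn_of_deriv_nonpos (convex_Icc t 1)
    · intro v hv
      exact ((hd v (by nlinarith [hv.1])).continuousAt).continuousWithinAt
    · intro v hv
      rw [interior_Icc] at hv
      exact ((hd v (by nlinarith [hv.1])).differentiableAt).differentiableWithinAt
    · intro v hv
      rw [interior_Icc] at hv
      have hv0 : 0 < v := lt_trans ht0 hv.1
      rw [(hd v hv0.ne').deriv]
      have e1 : v ^ (p-1-1) * v = v ^ (p-1) := by
        rw [← Real.rpow_add_one hv0.ne' (p-1-1)]; norm_num
      have e2 : (1:ℝ) ≤ v ^ (p-1-1) :=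
        Real.one_le_rpow_of_pos_of_le_one_of_nonpos hv0 hv.2.le (by linarith)
      have hcc : 2 * c = p * (p-1) := by rw [hc]; ring
      have e3 : (p-1) * (p * v ^ (p-1)) - p * ((p-1) * v ^ (p-1-1)) + 2*c*(1-v)
          = -(p*(p-1)) * ((v ^ (p-1-1) - 1) * (1 - v)) := by
        linear_combination (-(p*(p-1))) * e1 + (1-v) * hcc
      rw [e3]
      have key : 0 ≤ (v ^ (p-1-1) - 1) * (1 - v) :=
        mul_nonneg (by linarith) (by linarith [hv.2])
      nlinarith [key, mul_pos (by linarith : (0:ℝ) < p) (by linarith : (0:ℝ) < p - 1)]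
  have h1 : f 1 ≤ f t := hanti ⟨le_rfl, ht1⟩ ⟨ht1, le_rfl⟩ ht1
  have h0 : f 1 = 0 := by simp [hf, Real.one_rpow]
  rw [h0] at h1
  simp only [hf] at h1
  linarith

lemma rpow_id_one {x : ℝ} (q : ℝ) (hx : 0 < x) : x ^ (q - 1) * x = x ^ q := by
  rw [← Real.rpow_add_one hx.ne' (q-1)]; norm_num

lemma sq_mul_rpow {x : ℝ} (q : ℝ) (hx : 0 < x) : x ^ (2:ℕ) * x ^ (q - 2) = x ^ q := by
  rw [← Real.rpow_natCast x 2, ← Real.rpow_add hx]; norm_num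

lemma lemA_hom {p : ℝ} (hp1 : 1 < p) (hp2 : p < 2) {x y : ℝ} (hx : 0 ≤ x) (hxy : x ≤ y)
    (hy : 0 < y) :
    p * (p-1)/2 * (y - x)^2 * y ^ (p-2) ≤ y ^ p - x ^ p - p * x ^ (p-1) * (y - x) := by
  have hyp : (0:ℝ) < y ^ p := Real.rpow_pos_of_pos hy p
  have hy2 := sq_mul_rpow p hy
  rcases eq_or_lt_of_le hx with h0 | hx'
  · rw [← h0]
    rw [Real.zero_rpow (by linarith : p ≠ 0), Real.zero_rpow (by linarith : p - 1 ≠ 0)]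
    have hc : p * (p-1)/2 ≤ 1 := by nlinarith
    nlinarith [hyp]
  · set t := x / y with ht
    have ht0 : 0 < t := div_pos hx' hy
    have ht1 : t ≤ 1 := (div_le_one hy).mpr hxy
    have hxe : x = t * y := by rw [ht, div_mul_cancel₀ x hy.ne']
    have key := mul_le_mul_of_nonneg_right (lemA hp1 hp2 ht0 ht1) hyp.le
    have ht_id := rpow_id_one p ht0
    have hy_id := rpow_id_one p hy
    rw [hxe, Real.mul_rpow ht0.le hy.le, Real.mul_rpow ht0.le hy.le]
    have eL : p * (p-1)/2 * (y - t*y)^2 * y ^ (p-2) = (p * (p-1)/2 * (1-t)^2) * y ^ p := by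
      linear_combination (p * (p-1)/2 * (1-t)^2) * hy2
    have eR : t ^ p * y ^ p + p * (t ^ (p-1) * y ^ (p-1)) * (y - t*y)
        = (1 - (1 + (p-1) * t ^ p - p * t ^ (p-1))) * y ^ p := by
      linear_combination (p * t ^ (p-1) * (1 - t)) * hy_id - (p * y ^ p) * ht_id
    nlinarith [key, eL, eR]

lemma lemB_hom {p : ℝ} (hp1 : 1 < p) (hp2 : p < 2) {w x : ℝ} (hw : 0 ≤ w) (hwx : w ≤ x)
    (hx : 0 < x) :
    p * (p-1)/2 * (x - w)^2 * x ^ (p-2) ≤ w ^ p - x ^ p - p * x ^ (p-1) * (w - x) := by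
  have hxp : (0:ℝ) < x ^ p := Real.rpow_pos_of_pos hx p
  have hx2 := sq_mul_rpow p hx
  set u := w / x with hu
  have hu0 : 0 ≤ u := div_nonneg hw hx.le
  have hu1 : u ≤ 1 := (div_le_one hx).mpr hwx
  have hwe : w = u * x := by rw [hu, div_mul_cancel₀ w hx.ne']
  have key := mul_le_mul_of_nonneg_right (lemB hp1 hp2 hu0 hu1) hxp.le
  have hx_id := rpow_id_one p hx
  rw [hwe, Real.mul_rpow hu0 hx.le]
  have eL : p * (p-1)/2 * (x - u*x)^2 * x ^ (p-2) = (p * (p-1)/2 * (1-u)^2) * x ^ p := by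
    linear_combination (p * (p-1)/2 * (1-u)^2) * hx2
  have eR : u ^ p * x ^ p - x ^ p - p * x ^ (p-1) * (u*x - x)
      = (u ^ p - 1 + p * (1 - u)) * x ^ p := by
    linear_combination (p * (1 - u)) * hx_id
  nlinarith [key, eL, eR]

lemma lemC_hom {p : ℝ} (hp1 : 1 < p) (hp2 : p < 2) {a b : ℝ} (ha : 0 ≤ a) (hab : a ≤ b)
    (hb : 0 < b) :
    p * (p-1)/2 * (a + b)^2 * b ^ (p-2) ≤ b ^ p + p * a ^ (p-1) * b + (p-1) * a ^ p := by
  have hb2 := sq_mul_rpow p hb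
  have hb1 : b ^ (p-2) * b = b ^ (p-1) := by
    rw [← Real.rpow_add_one hb.ne' (p-2)]; congr 1; ring
  have hbp : (0:ℝ) < b ^ p := Real.rpow_pos_of_pos hb p
  have f1 : a^(2:ℕ) * b ^ (p-2) ≤ a ^ p := by
    rcases eq_or_lt_of_le ha with h0 | ha'
    · rw [← h0]; rw [Real.zero_rpow (by linarith : p ≠ 0)]; simp
    · have hmono : b ^ (p-2) ≤ a ^ (p-2) :=
        Real.rpow_le_rpow_of_nonpos ha' hab (by linarith)
      calc a^(2:ℕ) * b ^ (p-2) ≤ a^(2:ℕ) * a ^ (p-2) := by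
            apply mul_le_mul_of_nonneg_left hmono (by positivity)
        _ = a ^ p := sq_mul_rpow p ha'
  have f2 : a * b ^ (p-1) ≤ a ^ (p-1) * b := by
    rcases eq_or_lt_of_le ha with h0 | ha'
    · rw [← h0]; rw [Real.zero_rpow (by linarith : p - 1 ≠ 0)]; simp
    · have hmono : b ^ (p-2) ≤ a ^ (p-2) :=
        Real.rpow_le_rpow_of_nonpos ha' hab (by linarith)
      have ha1 : a ^ (p-2) * a = a ^ (p-1) := by
        rw [← Real.rpow_add_one ha'.ne' (p-2)]; congr 1; ring
      calc a * b ^ (p-1) = (a * b) * b ^ (p-2) := by rw [← hb1]; ring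
        _ ≤ (a * b) * a ^ (p-2) := by
            apply mul_le_mul_of_nonneg_left hmono (by positivity)
        _ = a ^ (p-1) * b := by rw [← ha1]; ring
  have hap : 0 ≤ a ^ p := Real.rpow_nonneg ha p
  have hab1 : 0 ≤ a ^ (p-1) * b := mul_nonneg (Real.rpow_nonneg ha _) hb.le
  -- expand (a+b)^2 * b^(p-2) = a^2 b^(p-2) + 2ab^(p-1) + b^p
  have expand : (a+b)^2 * b ^ (p-2)
      = a^(2:ℕ) * b ^ (p-2) + 2 * (a * b ^ (p-1)) + b ^ p := by
    linear_combination (2*a) * hb1 + hb2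
  have hc0 : (0:ℝ) ≤ p * (p-1)/2 := by nlinarith
  have hpp : (0:ℝ) ≤ p * (p-1) := by nlinarith
  have expand2 : p * (p-1)/2 * (a+b)^2 * b ^ (p-2)
      = p * (p-1)/2 * (a^(2:ℕ) * b ^ (p-2)) + p * (p-1) * (a * b ^ (p-1))
        + p * (p-1)/2 * b ^ p := by linear_combination (p * (p-1)/2) * expand
  rw [expand2]
  have t1 := mul_le_mul_of_nonneg_left f1 hc0
  have t2 := mul_le_mul_of_nonneg_left f2 hpp
  have t3 : p * (p-1)/2 * a ^ p ≤ (p-1) * a ^ p := by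
    have h := mul_nonneg (show (0:ℝ) ≤ (p-1)*(2-p)/2 by nlinarith) hap
    linarith
  have t4 : p * (p-1) * (a ^ (p-1) * b) ≤ p * (a ^ (p-1) * b) := by
    have h := mul_nonneg (show (0:ℝ) ≤ p*(2-p) by nlinarith) hab1
    linarith
  have t5 : p * (p-1)/2 * b ^ p ≤ b ^ p := by
    have h := mul_nonneg (show (0:ℝ) ≤ 1 - p*(p-1)/2 by nlinarith) hbp.le
    linarith
  linarith

lemma lemD_hom {p : ℝ} (hp1 : 1 < p) (hp2 : p < 2) {a b : ℝ} (hb : 0 ≤ b) (hab : b ≤ a)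
    (ha : 0 < a) :
    p * (p-1)/2 * (a + b)^2 * a ^ (p-2) ≤ b ^ p + (p-1) * a ^ p + p * a ^ (p-1) * b := by
  have ha2 := sq_mul_rpow p ha
  have ha1 : a ^ (p-2) * a = a ^ (p-1) := by
    rw [← Real.rpow_add_one ha.ne' (p-2)]; congr 1; ring
  have hap : (0:ℝ) < a ^ p := Real.rpow_pos_of_pos ha p
  have f1 : b^(2:ℕ) * a ^ (p-2) ≤ b ^ p := by
    rcases eq_or_lt_of_le hb with h0 | hb'
    · rw [← h0]; rw [Real.zero_rpow (by linarith : p ≠ 0)]; simp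
    · have hmono : a ^ (p-2) ≤ b ^ (p-2) :=
        Real.rpow_le_rpow_of_nonpos hb' hab (by linarith)
      calc b^(2:ℕ) * a ^ (p-2) ≤ b^(2:ℕ) * b ^ (p-2) := by
            apply mul_le_mul_of_nonneg_left hmono (by positivity)
        _ = b ^ p := sq_mul_rpow p hb'
  have hab1 : 0 ≤ a ^ (p-1) * b := mul_nonneg (Real.rpow_nonneg ha.le _) hb
  have hbp : 0 ≤ b ^ p := Real.rpow_nonneg hb p
  have expand : (a+b)^2 * a ^ (p-2)
      = b^(2:ℕ) * a ^ (p-2) + 2 * (a ^ (p-1) * b) + a ^ p := by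
    linear_combination (2*b) * ha1 + ha2
  have hc0 : (0:ℝ) ≤ p * (p-1)/2 := by nlinarith
  have expand2 : p * (p-1)/2 * (a+b)^2 * a ^ (p-2)
      = p * (p-1)/2 * (b^(2:ℕ) * a ^ (p-2)) + p * (p-1) * (a ^ (p-1) * b)
        + p * (p-1)/2 * a ^ p := by linear_combination (p * (p-1)/2) * expand
  rw [expand2]
  have t1 := mul_le_mul_of_nonneg_left f1 hc0
  have t3 : p * (p-1)/2 * a ^ p ≤ (p-1) * a ^ p := by
    have h := mul_nonneg (show (0:ℝ) ≤ (p-1)*(2-p)/2 by nlinarith) hap.le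
    linarith
  have t4 : p * (p-1) * (a ^ (p-1) * b) ≤ p * (a ^ (p-1) * b) := by
    have h := mul_nonneg (show (0:ℝ) ≤ p*(2-p) by nlinarith) hab1
    linarith
  have t5 : p * (p-1)/2 * b ^ p ≤ b ^ p := by
    have h := mul_nonneg (show (0:ℝ) ≤ 1 - p*(p-1)/2 by nlinarith) hbp
    linarith
  linarith

noncomputable def rsign (x : ℝ) : ℝ := if x = 0 then 0 else x / |x|

lemma rsign_neg (x : ℝ) : rsign (-x) = - rsign x := by
  rcases eq_or_ne x 0 with rfl | hx
  · simp [rsign]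
  · simp [rsign, hx, neg_eq_zero, abs_neg, neg_div]

lemma main_nonneg (p : ℝ) (hp1 : 1 < p) (hp2 : p < 2)
    (x h : ℝ) (hx : 0 ≤ x) (hxh : max |x| |x + h| ≠ 0) :
    (p * (p - 1) / 2) * h ^ 2 * (max (x ^ 2) ((x + h) ^ 2)) ^ ((p - 2) / 2)
      ≤ |x + h| ^ p - |x| ^ p - p * |x| ^ (p - 1) * rsign x * h := by
  set M := max |x| |x + h| with hMdef
  have hM0 : 0 ≤ M := le_trans (abs_nonneg x) (le_max_left _ _)
  have hM : 0 < M := lt_of_le_of_ne hM0 (Ne.symm hxh)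
  have e_max : max (x ^ 2) ((x + h) ^ 2) = M ^ 2 := by
    rw [← sq_abs x, ← sq_abs (x + h), hMdef]
    rcases le_total |x| |x + h| with hc | hc
    · rw [max_eq_right hc, max_eq_right (pow_le_pow_left₀ (abs_nonneg x) hc 2)]
    · rw [max_eq_left hc, max_eq_left (pow_le_pow_left₀ (abs_nonneg _) hc 2)]
  have e_pow : (M ^ 2 : ℝ) ^ ((p - 2) / 2) = M ^ (p - 2) := by
    rw [← Real.rpow_natCast M 2, ← Real.rpow_mul hM0]
    congr 1; ring
  rw [e_max, e_pow]
  rcases eq_or_lt_of_le hx with h0 | hx'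
  · -- x = 0
    have hx0 : x = 0 := h0.symm
    subst hx0
    have hh : h ≠ 0 := fun hh0 => hxh (by rw [hMdef, hh0]; simp)
    have hMh : M = |h| := by rw [hMdef]; simp
    have habs : (0:ℝ) ≤ |h| := abs_nonneg h
    have hrs : rsign 0 = 0 := by simp [rsign]
    rw [hMh, hrs, mul_zero, zero_mul, sub_zero]
    simp only [zero_add, abs_zero]
    rw [Real.zero_rpow (by linarith : p ≠ 0)]
    have e3 := sq_mul_rpow p (abs_pos.mpr hh)
    have e4 : h ^ 2 * |h| ^ (p - 2) = |h| ^ p := by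
      rw [← sq_abs h]; exact e3
    have t5 : p * (p-1)/2 * |h| ^ p ≤ |h| ^ p := by
      have hc := mul_nonneg (show (0:ℝ) ≤ 1 - p*(p-1)/2 by nlinarith)
        (Real.rpow_nonneg habs p)
      linarith
    have e5 : p * (p - 1) / 2 * h ^ 2 * |h| ^ (p - 2)
        = p * (p - 1) / 2 * (h ^ 2 * |h| ^ (p - 2)) := by ring
    rw [e5, e4]
    linarith
  · -- 0 < x
    have habsx : |x| = x := abs_of_pos hx'
    have hsign : rsign x = 1 := by
      rw [rsign, if_neg hx'.ne', habsx, div_self hx'.ne']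
    rw [habsx, hsign]
    have hx_id := rpow_id_one p hx'
    rcases le_or_gt 0 (x + h) with hxh0 | hxh0
    · have habs2 : |x + h| = x + h := abs_of_nonneg hxh0
      rw [habs2]
      rcases le_total 0 h with hh0 | hh0
      · -- h ≥ 0 : M = x + h
        have hMx : M = x + h := by rw [hMdef, habsx, habs2]; exact max_eq_right (by linarith)
        rw [hMx]
        have key := lemA_hom hp1 hp2 hx'.le (by linarith : x ≤ x + h) (by linarith)
        have e : x + h - x = h := by ring
        rw [e] at key
        linarith [key]
      · -- h ≤ 0 : M = x
        have hMx : M = x := by rw [hMdef, habsx, habs2]; exact max_eq_left (by linarith)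
        rw [hMx]
        have key := lemB_hom hp1 hp2 hxh0 (by linarith : x + h ≤ x) hx'
        have e : (x - (x + h))^2 = h^2 := by ring
        have e2 : x + h - x = h := by ring
        rw [e, e2] at key
        linarith [key]
    · have habs2 : |x + h| = -(x + h) := abs_of_neg hxh0
      rw [habs2]
      rcases le_total x (-(x + h)) with hcmp | hcmp
      · -- M = -(x+h)
        have hMx : M = -(x + h) := by rw [hMdef, habsx, habs2]; exact max_eq_right hcmp
        rw [hMx]
        have key := lemC_hom hp1 hp2 hx'.le hcmp (by linarith)
        have e : (x + -(x + h))^2 = h^2 := by ring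
        rw [e] at key
        nlinarith [key, hx_id]
      · -- M = x
        have hMx : M = x := by rw [hMdef, habsx, habs2]; exact max_eq_left hcmp
        rw [hMx]
        have key := lemD_hom hp1 hp2 (by linarith : (0:ℝ) ≤ -(x + h)) hcmp hx'
        have e : (x + -(x + h))^2 = h^2 := by ring
        rw [e] at key
        nlinarith [key, hx_id]

theorem taylor_remainder_lower_bound (p : ℝ) (hp1 : 1 < p) (hp2 : p < 2)
    (x h : ℝ) (hxh : max |x| |x + h| ≠ 0) :
    (p * (p - 1) / 2) * h ^ 2 * (max (x ^ 2) ((x + h) ^ 2)) ^ ((p - 2) / 2)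
      ≤ |x + h| ^ p - |x| ^ p - p * |x| ^ (p - 1) * rsign x * h := by
  rcases le_or_gt 0 x with hx | hx
  · exact main_nonneg p hp1 hp2 x h hx hxh
  · have e1 : -x + -h = -(x + h) := by ring
    have hneg := main_nonneg p hp1 hp2 (-x) (-h) (by linarith)
      (by rw [e1, abs_neg, abs_neg]; exact hxh)
    rw [e1, abs_neg, abs_neg, neg_sq, neg_sq, neg_sq, rsign_neg] at hneg
    linarith [hneg]
end

section
/- Let (f_n)_{n≥0} be a nondecreasing sequence of RCLL (right-continuous with left limits) functions on [0,T] converging pointwise to an RCLL function f, and suppose g is an RCLL function on [0,T] with f ≥ g pointwise. If in addition the left-limit processes satisfy (f_n)_− ↗ f_− pointwise, then sup_{t∈[0,T]} ((f_n)_{t−} − g_{t−})⁻ → 0 as n → ∞, where x⁻ = max(−x, 0) denotes the negative part. -/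
open Filter Set Topology

/-- Left limit on `[0,T]`, with the convention `f_{0-} := f 0`. -/
noncomputable def llim (f : ℝ → ℝ) (t : ℝ) : ℝ :=
  if t = 0 then f 0 else Function.leftLim f t

/-- `f` is RCLL (càdlàg) on `[0,T]` (`f_{0-} := f 0`). -/
def RCLLOn (f : ℝ → ℝ) (T : ℝ) : Prop :=
  (∀ t ∈ Ico (0:ℝ) T, Tendsto f (nhdsWithin t (Ioi t)) (nhds (f t))) ∧
  (∀ t ∈ Ioc (0:ℝ) T, Tendsto f (nhdsWithin t (Iio t)) (nhds (llim f t)))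

/-- Pointwise inequalities pass to left limits. -/
lemma llim_mono_of_le {T : ℝ} {f g : ℝ → ℝ} (hf : RCLLOn f T) (hg : RCLLOn g T)
    (hge : ∀ t ∈ Icc (0:ℝ) T, g t ≤ f t) :
    ∀ t ∈ Icc (0:ℝ) T, llim g t ≤ llim f t := by
  rintro t ⟨h0, hTle⟩
  rcases eq_or_lt_of_le h0 with h0 | h0
  · simp only [llim, ← h0, if_pos rfl]
    exact hge 0 ⟨le_rfl, by linarith⟩
  · have hmem : Ioo 0 t ∈ 𝓝[<] t := Ioo_mem_nhdsLT_of_mem ⟨h0, le_rfl⟩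
    refine le_of_tendsto_of_tendsto (hg.2 t ⟨h0, hTle⟩) (hf.2 t ⟨h0, hTle⟩) ?_
    filter_upwards [hmem] with u hu
    exact hge u ⟨hu.1.le, hu.2.le.trans hTle⟩

/-- Pointwise approximate inequalities on an interval pass to left limits. -/
lemma llim_le_llim_add {T a b ε : ℝ} {g h : ℝ → ℝ}
    (hg : RCLLOn g T) (hh : RCLLOn h T)
    (hle : ∀ u ∈ Ioo a b ∩ Icc (0:ℝ) T, g u ≤ h u + ε) :
    ∀ s ∈ Ioo a b ∩ Icc (0:ℝ) T, llim g s ≤ llim h s + ε := by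
  rintro s ⟨⟨ha, hb⟩, h0, hTle⟩
  rcases eq_or_lt_of_le h0 with h0 | h0
  · subst h0
    simp only [llim, if_pos rfl]
    exact hle 0 ⟨⟨ha, hb⟩, le_rfl, hTle⟩
  · have hmem : Ioo (max a 0) s ∈ 𝓝[<] s :=
      Ioo_mem_nhdsLT_of_mem ⟨max_lt ha h0, le_rfl⟩
    refine le_of_tendsto_of_tendsto (hg.2 s ⟨h0, hTle⟩)
      ((hh.2 s ⟨h0, hTle⟩).add_const ε) ?_
    filter_upwards [hmem] with u hu
    refine hle u ⟨⟨lt_of_le_of_lt (le_max_left a 0) hu.1, hu.2.trans hb⟩,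
      (le_max_right a 0).trans hu.1.le, hu.2.le.trans hTle⟩

theorem generalized_dini (T : ℝ) (hT : 0 < T) (fn : ℕ → ℝ → ℝ) (f g : ℝ → ℝ)
    (hfn_rcll : ∀ n, RCLLOn (fn n) T) (hf_rcll : RCLLOn f T) (hg_rcll : RCLLOn g T)
    (hmono : ∀ t ∈ Icc (0:ℝ) T, Monotone fun n => fn n t)
    (hconv : ∀ t ∈ Icc (0:ℝ) T, Tendsto (fun n => fn n t) atTop (nhds (f t)))
    (hge : ∀ t ∈ Icc (0:ℝ) T, g t ≤ f t)
    (hleft_mono : ∀ t ∈ Icc (0:ℝ) T, Monotone fun n => llim (fn n) t)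
    (hleft_conv : ∀ t ∈ Icc (0:ℝ) T,
      Tendsto (fun n => llim (fn n) t) atTop (nhds (llim f t))) :
    Tendsto (fun n => ⨆ t : Icc (0:ℝ) T, max (-(llim (fn n) t - llim g t)) 0)
      atTop (nhds 0) := by
  have hllim_ge := llim_mono_of_le hf_rcll hg_rcll hge
  have key : ∀ ε > (0:ℝ), ∃ N : ℕ, ∀ t ∈ Icc (0:ℝ) T,
      llim g t ≤ llim (fn N) t + ε := by
    intro ε hε
    have hε3 : (0:ℝ) < ε/3 := by linarith
    have hpt : ∀ t : Icc (0:ℝ) T, ∃ n : ℕ, ∃ δ : ℝ, 0 < δ ∧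
        ∀ s ∈ Ioo ((t:ℝ) - δ) ((t:ℝ) + δ) ∩ Icc (0:ℝ) T,
          llim g s ≤ llim (fn n) s + ε := by
      rintro ⟨t, ht0, htT⟩
      have htI : t ∈ Icc (0:ℝ) T := ⟨ht0, htT⟩
      obtain ⟨n1, hn1⟩ := ((hconv t htI).eventually
        (eventually_gt_nhds (show f t - ε/3 < f t by linarith))).exists
      obtain ⟨n2, hn2⟩ := ((hleft_conv t htI).eventually
        (eventually_gt_nhds (show llim f t - ε/3 < llim f t by linarith))).exists
      set n := max n1 n2 with hn
      have hA : f t - ε/3 < fn n t := lt_of_lt_of_le hn1 (hmono t htI (le_max_left _ _))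
      have hB : llim f t - ε/3 < llim (fn n) t :=
        lt_of_lt_of_le hn2 (hleft_mono t htI (le_max_right _ _))
      have hgf : g t ≤ f t := hge t htI
      have hgfl : llim g t ≤ llim f t := hllim_ge t htI
      obtain ⟨δR, hδR, hR⟩ : ∃ δR > (0:ℝ), ∀ u ∈ Ioo t (t + δR), u ≤ T →
          g u ≤ fn n u + ε := by
        rcases lt_or_ge t T with hlt | hge'
        · have h1 : ∀ᶠ u in 𝓝[>] t, fn n t - ε/3 < fn n u :=
            ((hfn_rcll n).1 t ⟨ht0, hlt⟩).eventually
              (eventually_gt_nhds (by linarith))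
          have h2 : ∀ᶠ u in 𝓝[>] t, g u < g t + ε/3 :=
            (hg_rcll.1 t ⟨ht0, hlt⟩).eventually
              (eventually_lt_nhds (by linarith))
          obtain ⟨u', hu', hsub⟩ :=
            mem_nhdsGT_iff_exists_Ioo_subset.1 (h1.and h2)
          refine ⟨u' - t, by simpa using hu', fun u hu _ => ?_⟩
          have hu2 : u ∈ Ioo t u' := ⟨hu.1, by linarith [hu.2]⟩
          obtain ⟨hb1, hb2⟩ := hsub hu2
          linarith
        · exact ⟨1, one_pos, fun u hu huT => absurd (hu.1.trans_le huT) (not_lt.2 hge')⟩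
      obtain ⟨δL, hδL, hL⟩ : ∃ δL > (0:ℝ), ∀ u ∈ Ioo (t - δL) t, 0 ≤ u →
          g u ≤ fn n u + ε := by
        rcases lt_or_ge 0 t with hlt | hge'
        · have h1 : ∀ᶠ u in 𝓝[<] t, llim (fn n) t - ε/3 < fn n u :=
            ((hfn_rcll n).2 t ⟨hlt, htT⟩).eventually
              (eventually_gt_nhds (by linarith))
          have h2 : ∀ᶠ u in 𝓝[<] t, g u < llim g t + ε/3 :=
            (hg_rcll.2 t ⟨hlt, htT⟩).eventually
              (eventually_lt_nhds (by linarith))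
          obtain ⟨l, hl, hsub⟩ :=
            mem_nhdsLT_iff_exists_Ioo_subset.1 (h1.and h2)
          refine ⟨t - l, by simpa using hl, fun u hu _ => ?_⟩
          have hu2 : u ∈ Ioo l t := ⟨by linarith [hu.1], hu.2⟩
          obtain ⟨hb1, hb2⟩ := hsub hu2
          linarith
        · exact ⟨1, one_pos, fun u hu hu0 =>
            absurd (hu.2.trans_le hge') (not_lt.2 hu0)⟩
      refine ⟨n, min δL δR, lt_min hδL hδR, ?_⟩
      apply llim_le_llim_add hg_rcll (hfn_rcll n)
      rintro u ⟨⟨hu1, hu2⟩, hu0, huT⟩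
      rcases lt_trichotomy u t with h | h | h
      · exact hL u ⟨by simp only [Subtype.coe_mk] at hu1; linarith [min_le_left δL δR], h⟩ hu0
      · subst h
        have := hge u ⟨hu0, huT⟩
        linarith
      · exact hR u ⟨h, by linarith [min_le_right δL δR]⟩ huT
    choose nt δt hδt hp using hpt
    obtain ⟨F, hF⟩ := isCompact_Icc.elim_finite_subcover
      (fun i : Icc (0:ℝ) T => Ioo ((i:ℝ) - δt i) ((i:ℝ) + δt i))
      (fun i => isOpen_Ioo)
      (fun x hx => mem_iUnion.2 ⟨⟨x, hx⟩,
        ⟨by simpa using hδt ⟨x, hx⟩, by simpa using hδt ⟨x, hx⟩⟩⟩)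
    refine ⟨F.sup nt, fun t ht => ?_⟩
    obtain ⟨i, hi, hti⟩ := mem_iUnion₂.1 (hF ht)
    have h1 : llim g t ≤ llim (fn (nt i)) t + ε := hp i t ⟨hti, ht⟩
    have h2 : llim (fn (nt i)) t ≤ llim (fn (F.sup nt)) t :=
      hleft_mono t ht (Finset.le_sup hi)
    linarith
  have hne : Nonempty (Icc (0:ℝ) T) := ⟨⟨0, le_rfl, hT.le⟩⟩
  rw [Metric.tendsto_atTop]
  intro ε hε
  obtain ⟨N, hN⟩ := key (ε/2) (by linarith)
  refine ⟨N, fun n hn => ?_⟩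
  have hb : ∀ t : Icc (0:ℝ) T, max (-(llim (fn n) t - llim g t)) 0 ≤ ε/2 := by
    intro t
    refine max_le ?_ (by linarith)
    have h1 := hN t t.2
    have h2 : llim (fn N) (t:ℝ) ≤ llim (fn n) (t:ℝ) := hleft_mono t t.2 hn
    linarith
  have hsup_le : (⨆ t : Icc (0:ℝ) T, max (-(llim (fn n) t - llim g t)) 0) ≤ ε/2 :=
    ciSup_le hb
  have hsup_ge : (0:ℝ) ≤ ⨆ t : Icc (0:ℝ) T, max (-(llim (fn n) t - llim g t)) 0 :=
    Real.iSup_nonneg fun t => le_max_right _ _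
  rw [Real.dist_eq, sub_zero, abs_of_nonneg hsup_ge]
  linarith
end
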